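/- Let K be a field, S = K[x_{ij} : 1 ≤ i,j ≤ n], and G a simple graph on [n]. Then the ideal P_G = (x_{ii}x_{jj} − x_{ij}x_{ji} : {i,j} ∈ E(G)) is a prime ideal of S; equivalently, S/P_G is an integral domain. -/

import Mathlib

open MvPolynomial

/-- The diagonal 2-minor `f_{ij} = x_{ii}x_{jj} - x_{ij}x_{ji}`. -/
noncomputable def diagMinor (K : Type*) [Field K] (n : ℕ) (i j : Fin n) :
    MvPolynomial (Fin n × Fin n) K :=
  X (i, i) * X (j, j) - X (i, j) * X (j, i)

/-- The ideal `P_G` generated by the diagonal 2-minors of the edges of `G`. -/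
noncomputable def diagIdeal (K : Type*) [Field K] (n : ℕ)
    (G : SimpleGraph (Fin n)) : Ideal (MvPolynomial (Fin n × Fin n) K) :=
  Ideal.span {f | ∃ i j : Fin n, G.Adj i j ∧ i < j ∧ f = diagMinor K n i j}

noncomputable section
namespace Stmt9Aux

variable {D : Type*} [CommRing D]

def mgen (c : D) : MvPolynomial (Fin 2) D := X 0 * X 1 - C c

lemma normal_form (c : D) (f : MvPolynomial (Fin 2) D) :
    ∃ p q : Polynomial D, mgen c ∣ f - (Polynomial.aeval (X 0 : MvPolynomial (Fin 2) D) p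
      + Polynomial.aeval (X 1 : MvPolynomial (Fin 2) D) q) := by
  induction f using MvPolynomial.induction_on with
  | C a =>
      exact ⟨Polynomial.C a, 0, by simp⟩
  | add f g hf hg =>
      obtain ⟨p1, q1, w1, h1⟩ := hf
      obtain ⟨p2, q2, w2, h2⟩ := hg
      exact ⟨p1 + p2, q1 + q2, w1 + w2, by simp only [map_add]; linear_combination h1 + h2⟩
  | mul_X f s hf =>
      obtain ⟨p, q, w, h⟩ := hf
      have hq : (Polynomial.aeval (X 1 : MvPolynomial (Fin 2) D)) q
          = X 1 * Polynomial.aeval (X 1 : MvPolynomial (Fin 2) D) q.divX + C (q.coeff 0) := by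
        conv_lhs => rw [← Polynomial.X_mul_divX_add q]
        simp only [map_add, map_mul, Polynomial.aeval_X, Polynomial.aeval_C,
          MvPolynomial.algebraMap_eq]
      have hp : (Polynomial.aeval (X 0 : MvPolynomial (Fin 2) D)) p
          = X 0 * Polynomial.aeval (X 0 : MvPolynomial (Fin 2) D) p.divX + C (p.coeff 0) := by
        conv_lhs => rw [← Polynomial.X_mul_divX_add p]
        simp only [map_add, map_mul, Polynomial.aeval_X, Polynomial.aeval_C,
          MvPolynomial.algebraMap_eq]
      fin_cases s <;> simp only [Fin.mk_zero, Fin.mk_one, Fin.isValue]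
      · refine ⟨p * Polynomial.X + Polynomial.C (q.coeff 0) * Polynomial.X,
          Polynomial.C c * q.divX,
          w * X 0 + Polynomial.aeval (X 1 : MvPolynomial (Fin 2) D) q.divX, ?_⟩
        simp only [map_add, map_mul, Polynomial.aeval_X, Polynomial.aeval_C,
          MvPolynomial.algebraMap_eq, mgen] at h hq ⊢
        linear_combination (X (0 : Fin 2)) * h + (X (0 : Fin 2)) * hq

      · refine ⟨Polynomial.C c * p.divX,
          q * Polynomial.X + Polynomial.C (p.coeff 0) * Polynomial.X,
          w * X 1 + Polynomial.aeval (X 0 : MvPolynomial (Fin 2) D) p.divX, ?_⟩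
        simp only [map_add, map_mul, Polynomial.aeval_X, Polynomial.aeval_C,
          MvPolynomial.algebraMap_eq, mgen] at h hp ⊢
        linear_combination (X (1 : Fin 2)) * h + (X (1 : Fin 2)) * hp


section Phi
open LaurentPolynomial

def lphi (c : D) : MvPolynomial (Fin 2) D →+* LaurentPolynomial D :=
  (MvPolynomial.eval₂Hom (LaurentPolynomial.C)
    ![LaurentPolynomial.T 1, LaurentPolynomial.C c * LaurentPolynomial.T (-1)])

lemma lphi_C (c a : D) : lphi c (C a) = LaurentPolynomial.C a := by simp [lphi]

lemma lphi_X0 (c : D) : lphi c (X 0) = LaurentPolynomial.T 1 := by simp [lphi]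

lemma lphi_X1 (c : D) : lphi c (X 1) =
    LaurentPolynomial.C c * LaurentPolynomial.T (-1) := by simp [lphi]

lemma lphi_mgen (c : D) : lphi c (mgen c) = 0 := by
  simp only [mgen, map_sub, map_mul, lphi_C, lphi_X0, lphi_X1]
  rw [show LaurentPolynomial.T (R := D) 1 * (LaurentPolynomial.C c * LaurentPolynomial.T (-1))
      = LaurentPolynomial.C c * (LaurentPolynomial.T 1 * LaurentPolynomial.T (-1)) by ring,
    ← LaurentPolynomial.T_add]
  simp

lemma lphi_aeval0 (c : D) (p : Polynomial D) :
    lphi c (Polynomial.aeval (X 0 : MvPolynomial (Fin 2) D) p)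
      = AddMonoidAlgebra.ofCoeff (p.sum fun i a => Finsupp.single (i : ℤ) a) := by
  rw [Polynomial.aeval_def, Polynomial.eval₂_eq_sum, Polynomial.sum_def, map_sum,
    Polynomial.sum_def, AddMonoidAlgebra.ofCoeff_sum]
  refine Finset.sum_congr rfl fun i _ => ?_
  rw [MvPolynomial.algebraMap_eq, map_mul, map_pow, lphi_C, lphi_X0, LaurentPolynomial.T_pow,
    AddMonoidAlgebra.ofCoeff_single, single_eq_C_mul_T]
  norm_num

lemma lphi_aeval1 (c : D) (q : Polynomial D) :
    lphi c (Polynomial.aeval (X 1 : MvPolynomial (Fin 2) D) q)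
      = AddMonoidAlgebra.ofCoeff (q.sum fun j b => Finsupp.single (-(j : ℤ)) (c ^ j * b)) := by
  rw [Polynomial.aeval_def, Polynomial.eval₂_eq_sum, Polynomial.sum_def, map_sum,
    Polynomial.sum_def, AddMonoidAlgebra.ofCoeff_sum]
  refine Finset.sum_congr rfl fun j _ => ?_
  rw [MvPolynomial.algebraMap_eq, map_mul, map_pow, lphi_C, lphi_X1, mul_pow,
    LaurentPolynomial.T_pow, AddMonoidAlgebra.ofCoeff_single, single_eq_C_mul_T, ← map_pow, ← mul_assoc, ← map_mul,
    mul_comm (q.coeff j) (c ^ j)]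
  norm_num

end Phi


section Extract

lemma sum_single_apply_nat (p : Polynomial D) (e : ℕ → D → D) (he : ∀ i, e i 0 = 0) (k : ℕ) :
    (p.sum fun i a => Finsupp.single (i : ℤ) (e i a)) ((k : ℕ) : ℤ) = e k (p.coeff k) := by
  classical
  rw [Polynomial.sum_def, Finsupp.finset_sum_apply]
  rw [Finset.sum_eq_single k]
  · exact Finsupp.single_eq_same
  · intro b _ hb
    rw [Finsupp.single_apply, if_neg (by exact_mod_cast hb)]
  · intro hk
    rw [Polynomial.notMem_support_iff.mp hk, he, Finsupp.single_apply, if_pos rfl]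

lemma sum_single_apply_neg_nat (q : Polynomial D) (e : ℕ → D → D) (he : ∀ i, e i 0 = 0)
    (k : ℕ) : (q.sum fun j b => Finsupp.single (-(j : ℤ)) (e j b)) (-(k : ℤ))
      = e k (q.coeff k) := by
  classical
  rw [Polynomial.sum_def, Finsupp.finset_sum_apply]
  rw [Finset.sum_eq_single k]
  · exact Finsupp.single_eq_same
  · intro b _ hb
    rw [Finsupp.single_apply, if_neg (by simpa using (by exact_mod_cast hb : (b : ℤ) ≠ k))]
  · intro hk
    rw [Polynomial.notMem_support_iff.mp hk, he, Finsupp.single_apply, if_pos rfl]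

lemma sum_single_apply_opp_sign (p : Polynomial D) (e : ℕ → D → D) (z : ℤ)
    (hz : ∀ i : ℕ, (i : ℤ) ≠ z) :
    (p.sum fun i a => Finsupp.single (i : ℤ) (e i a)) z = 0 := by
  classical
  rw [Polynomial.sum_def, Finsupp.finset_sum_apply]
  exact Finset.sum_eq_zero fun i _ => by rw [Finsupp.single_apply, if_neg (hz i)]

lemma sum_single_apply_opp_sign' (q : Polynomial D) (e : ℕ → D → D) (z : ℤ)
    (hz : ∀ j : ℕ, -(j : ℤ) ≠ z) :
    (q.sum fun j b => Finsupp.single (-(j : ℤ)) (e j b)) z = 0 := by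
  classical
  rw [Polynomial.sum_def, Finsupp.finset_sum_apply]
  exact Finset.sum_eq_zero fun j _ => by rw [Finsupp.single_apply, if_neg (hz j)]

end Extract

lemma span_mgen_eq_ker [IsDomain D] (c : D) (hc : c ≠ 0) :
    Ideal.span {mgen c} = RingHom.ker (lphi c) := by
  apply le_antisymm
  · rw [Ideal.span_le, Set.singleton_subset_iff]
    exact lphi_mgen c
  · intro f hf
    rw [RingHom.mem_ker] at hf
    obtain ⟨p, q, w, hw⟩ := normal_form c f
    set A : MvPolynomial (Fin 2) D := Polynomial.aeval (X 0 : MvPolynomial (Fin 2) D) p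
      + Polynomial.aeval (X 1 : MvPolynomial (Fin 2) D) q with hA
    have h0 : lphi c (f - A) = 0 := by rw [hw, map_mul, lphi_mgen, zero_mul]
    have hA0 : lphi c A = 0 := by
      have := h0
      rw [map_sub, hf, zero_sub, neg_eq_zero] at this
      exact this
    rw [hA, map_add, lphi_aeval0, lphi_aeval1] at hA0
    have key : ∀ z : ℤ, (p.sum fun i a => Finsupp.single (i : ℤ) a) z
        + (q.sum fun j b => Finsupp.single (-(j : ℤ)) (c ^ j * b)) z = 0 := by
      intro z
      have := congrArg (fun x : LaurentPolynomial D => AddMonoidAlgebra.coeff x z) hA0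
      simp only [AddMonoidAlgebra.coeff_add, AddMonoidAlgebra.coeff_ofCoeff, Finsupp.add_apply,
        AddMonoidAlgebra.coeff_zero, Finsupp.coe_zero, Pi.zero_apply] at this
      exact this
    have hp : ∀ k : ℕ, 0 < k → p.coeff k = 0 := by
      intro k hk
      have := key (k : ℤ)
      rwa [sum_single_apply_nat p (fun _ a => a) (fun _ => rfl) k,
        sum_single_apply_opp_sign' q _ _ (fun j => by omega), add_zero] at this
    have hq : ∀ k : ℕ, 0 < k → q.coeff k = 0 := by
      intro k hk
      have := key (-(k : ℤ))
      rw [sum_single_apply_neg_nat q (fun j b => c ^ j * b) (fun _ => mul_zero _) k,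
        sum_single_apply_opp_sign p _ _ (fun i => by omega), zero_add] at this
      exact (mul_eq_zero.mp this).resolve_left (pow_ne_zero _ hc)
    have h00 : p.coeff 0 + q.coeff 0 = 0 := by
      have := key ((0 : ℕ) : ℤ)
      rw [sum_single_apply_nat p (fun _ a => a) (fun _ => rfl) 0] at this
      rw [show ((0 : ℕ) : ℤ) = -((0 : ℕ) : ℤ) by norm_num,
        sum_single_apply_neg_nat q (fun j b => c ^ j * b) (fun _ => mul_zero _) 0] at this
      simpa using this
    have hpC : p = Polynomial.C (p.coeff 0) := by
      ext k
      cases k with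
      | zero => simp
      | succ k => simp [hp (k + 1) (Nat.succ_pos k), Polynomial.coeff_C]
    have hqC : q = Polynomial.C (q.coeff 0) := by
      ext k
      cases k with
      | zero => simp
      | succ k => simp [hq (k + 1) (Nat.succ_pos k), Polynomial.coeff_C]
    have hAz : A = 0 := by
      rw [hA]
      conv_lhs => rw [hpC, hqC]
      rw [Polynomial.aeval_C, Polynomial.aeval_C]
      rw [MvPolynomial.algebraMap_eq, ← map_add, h00, map_zero]
    rw [Ideal.mem_span_singleton]
    exact ⟨w, by rw [← hw, hAz, sub_zero]⟩

lemma lemA [IsDomain D] (c : D) (hc : c ≠ 0) : (Ideal.span {mgen c}).IsPrime := by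
  haveI : IsDomain (LaurentPolynomial D) := NoZeroDivisors.to_isDomain _
  rw [span_mgen_eq_ker c hc]
  exact RingHom.ker_isPrime _



lemma lemA2 (J : Ideal D) (hJ : J.IsPrime) (c : D) (hc : c ∉ J) :
    (Ideal.map (C : D →+* MvPolynomial (Fin 2) D) J ⊔ Ideal.span {mgen c}).IsPrime := by
  classical
  set ψ : MvPolynomial (Fin 2) D →+* MvPolynomial (Fin 2) (D ⧸ J) :=
    (MvPolynomial.map (Ideal.Quotient.mk J) : _ →+* _) with hψ
  have hs : Function.Surjective ψ := MvPolynomial.map_surjective _ Ideal.Quotient.mk_surjective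
  have hker : RingHom.ker ψ = Ideal.map (C : D →+* MvPolynomial (Fin 2) D) J := by
    rw [hψ, MvPolynomial.ker_map, Ideal.mk_ker]
  have hψm : ψ (mgen c) = mgen (Ideal.Quotient.mk J c) := by
    simp [hψ, mgen]
  have key : Ideal.comap ψ (Ideal.span {mgen (Ideal.Quotient.mk J c)})
      = Ideal.map (C : D →+* MvPolynomial (Fin 2) D) J ⊔ Ideal.span {mgen c} := by
    rw [← hψm, ← Set.image_singleton, ← Ideal.map_span,
      Ideal.comap_map_of_surjective ψ hs, ← RingHom.ker_eq_comap_bot, hker, sup_comm]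
  rw [← key]
  haveI : (Ideal.span {mgen (Ideal.Quotient.mk J c)}).IsPrime :=
    lemA _ (by simpa [Ne, Ideal.Quotient.eq_zero_iff_mem] using hc)
  exact Ideal.IsPrime.comap ψ


section Graph

variable (K : Type*) [Field K] {n : ℕ}

/-- The index equivalence isolating the two off-diagonal positions of an edge. -/
def epsi (i j : Fin n) (hij : i ≠ j) :
    (Fin n × Fin n) ≃ (Fin 2 ⊕ {w : Fin n × Fin n // w ≠ (i, j) ∧ w ≠ (j, i)}) where
  toFun w := if h1 : w = (i, j) then Sum.inl 0 else if h2 : w = (j, i) then Sum.inl 1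
    else Sum.inr ⟨w, h1, h2⟩
  invFun x := Sum.elim (fun y => if y = 0 then (i, j) else (j, i)) (fun w => w.1) x
  left_inv w := by
    by_cases h1 : w = (i, j)
    · simp [h1]
    · by_cases h2 : w = (j, i) <;> simp [h1, h2, hij, hij.symm]
  right_inv x := by
    rcases x with y | ⟨w, h1, h2⟩
    · fin_cases y
      · simp
      · simp [show (j, i) ≠ (i, j) from by simp [Prod.ext_iff]; tauto]
    · simp [h1, h2]

lemma epsi_u (i j : Fin n) (hij : i ≠ j) : epsi i j hij (i, j) = Sum.inl 0 := by simp [epsi]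

lemma epsi_v (i j : Fin n) (hij : i ≠ j) : epsi i j hij (j, i) = Sum.inl 1 := by
  simp [epsi, show (j, i) ≠ (i, j) from by simp [Prod.ext_iff]; tauto]

lemma epsi_other (i j : Fin n) (hij : i ≠ j) (w : Fin n × Fin n)
    (h1 : w ≠ (i, j)) (h2 : w ≠ (j, i)) : epsi i j hij w = Sum.inr ⟨w, h1, h2⟩ := by
  simp [epsi, h1, h2]

/-- The ring equivalence splitting off the two variables of an edge. -/
def PhiE (i j : Fin n) (hij : i ≠ j) :
    MvPolynomial (Fin n × Fin n) K ≃+*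
      MvPolynomial (Fin 2)
        (MvPolynomial {w : Fin n × Fin n // w ≠ (i, j) ∧ w ≠ (j, i)} K) :=
  (MvPolynomial.renameEquiv K (epsi i j hij)).toRingEquiv.trans
    (MvPolynomial.sumRingEquiv K _ _)

lemma PhiE_X (i j : Fin n) (hij : i ≠ j) (w : Fin n × Fin n) :
    PhiE K i j hij (X w)
      = MvPolynomial.sumToIter K _ _ (X (epsi i j hij w)) := by
  simp only [PhiE, RingEquiv.trans_apply, AlgEquiv.toRingEquiv_eq_coe,
    AlgEquiv.coe_ringEquiv, renameEquiv_apply, rename_X]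
  generalize epsi i j hij w = s
  rcases s with s | s <;> simp only [sumRingEquiv_X_inl, sumRingEquiv_X_inr, sumToIter_Xl, sumToIter_Xr]

/-- Total version of the restricted variables. -/
def pi0 (i j : Fin n) (hij : i ≠ j) (w : Fin n × Fin n) :
    {w : Fin n × Fin n // w ≠ (i, j) ∧ w ≠ (j, i)} :=
  if h : w ≠ (i, j) ∧ w ≠ (j, i) then ⟨w, h⟩
  else ⟨(i, i), by constructor <;> simp [Prod.ext_iff] <;> tauto⟩

lemma pi0_eq (i j : Fin n) (hij : i ≠ j) (w : Fin n × Fin n)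
    (h1 : w ≠ (i, j)) (h2 : w ≠ (j, i)) : pi0 i j hij w = ⟨w, h1, h2⟩ := by
  simp [pi0, h1, h2]

lemma PhiE_X_other (i j : Fin n) (hij : i ≠ j) (w : Fin n × Fin n)
    (h1 : w ≠ (i, j)) (h2 : w ≠ (j, i)) :
    PhiE K i j hij (X w) = C (X (pi0 i j hij w)) := by
  rw [PhiE_X, epsi_other i j hij w h1 h2, MvPolynomial.sumToIter_Xr,
    pi0_eq i j hij w h1 h2]

/-- The "image" minor living in the restricted polynomial ring. -/
def dmin (i j : Fin n) (hij : i ≠ j) (a b : Fin n) :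
    MvPolynomial {w : Fin n × Fin n // w ≠ (i, j) ∧ w ≠ (j, i)} K :=
  X (pi0 i j hij (a, a)) * X (pi0 i j hij (b, b))
    - X (pi0 i j hij (a, b)) * X (pi0 i j hij (b, a))

lemma diag_ne (i j a : Fin n) (hij : i ≠ j) : (a, a) ≠ (i, j) ∧ (a, a) ≠ (j, i) := by
  constructor <;> simp [Prod.ext_iff] <;> rintro rfl <;> tauto

lemma PhiE_minor_self (i j : Fin n) (hij : i ≠ j) :
    PhiE K i j hij (diagMinor K n i j)
      = - mgen (X (pi0 i j hij (i, i)) * X (pi0 i j hij (j, j))) := by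
  have d1 := diag_ne i j i hij
  have d2 := diag_ne i j j hij
  rw [diagMinor, map_sub, map_mul, map_mul,
    PhiE_X_other K i j hij _ d1.1 d1.2, PhiE_X_other K i j hij _ d2.1 d2.2,
    PhiE_X K i j hij (i, j), PhiE_X K i j hij (j, i), epsi_u, epsi_v,
    MvPolynomial.sumToIter_Xl, MvPolynomial.sumToIter_Xl, mgen, map_mul]
  ring

lemma PhiE_minor_other (i j : Fin n) (hij : i ≠ j) (a b : Fin n)
    (h1 : (a, b) ≠ (i, j)) (h2 : (a, b) ≠ (j, i))
    (h3 : (b, a) ≠ (i, j)) (h4 : (b, a) ≠ (j, i)) :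
    PhiE K i j hij (diagMinor K n a b) = C (dmin K i j hij a b) := by
  have d1 := diag_ne i j a hij
  have d2 := diag_ne i j b hij
  rw [diagMinor, map_sub, map_mul, map_mul,
    PhiE_X_other K i j hij _ d1.1 d1.2, PhiE_X_other K i j hij _ d2.1 d2.2,
    PhiE_X_other K i j hij _ h1 h2, PhiE_X_other K i j hij _ h3 h4,
    dmin, map_sub, map_mul, map_mul]


lemma map_equiv_isPrime {R S : Type*} [CommRing R] [CommRing S] (f : R ≃+* S) (I : Ideal R)
    (hI : I.IsPrime) : (Ideal.map f.toRingHom I).IsPrime := by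
  rw [RingEquiv.toRingHom_eq_coe, Ideal.map_comap_of_equiv f]
  exact Ideal.IsPrime.comap _

lemma comap_C_map_C {A : Type*} [CommRing A] (J : Ideal A) :
    Ideal.comap (C : A →+* MvPolynomial (Fin 2) A) (Ideal.map C J) = J := by
  have h1 : Ideal.map (C : A →+* MvPolynomial (Fin 2) A) J
      = RingHom.ker ((MvPolynomial.map (Ideal.Quotient.mk J) :
          MvPolynomial (Fin 2) A →+* MvPolynomial (Fin 2) (A ⧸ J))) := by
    rw [MvPolynomial.ker_map, Ideal.mk_ker]
  rw [h1]
  ext x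
  rw [Ideal.mem_comap, RingHom.mem_ker, MvPolynomial.map_C,
    show ((C (Ideal.Quotient.mk J x) : MvPolynomial (Fin 2) (A ⧸ J)) = 0)
      ↔ Ideal.Quotient.mk J x = 0 from map_eq_zero_iff _ (MvPolynomial.C_injective _ _)]
  exact Ideal.Quotient.eq_zero_iff_mem

lemma hc_not_mem (i j : Fin n) (hij : i ≠ j) (s : Finset (Fin n × Fin n)) :
    (X (pi0 i j hij (i, i)) * X (pi0 i j hij (j, j)) :
        MvPolynomial {w : Fin n × Fin n // w ≠ (i, j) ∧ w ≠ (j, i)} K)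
      ∉ Ideal.span ((fun e : Fin n × Fin n => dmin K i j hij e.1 e.2) '' (s : Set (Fin n × Fin n))) := by
  intro hmem
  set ev : MvPolynomial {w : Fin n × Fin n // w ≠ (i, j) ∧ w ≠ (j, i)} K →+* K :=
    (MvPolynomial.eval (fun _ => (1 : K))) with hev
  have hle : Ideal.span ((fun e : Fin n × Fin n => dmin K i j hij e.1 e.2) '' (s : Set (Fin n × Fin n))) ≤ RingHom.ker ev := by
    rw [Ideal.span_le]
    rintro x ⟨e, -, rfl⟩
    simp [RingHom.mem_ker, hev, dmin]
  have := hle hmem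
  simp [RingHom.mem_ker, hev] at this

lemma lemC (s : Finset (Fin n × Fin n)) (hs : ∀ e ∈ s, e.1 < e.2) :
    (Ideal.span ((fun e : Fin n × Fin n => diagMinor K n e.1 e.2) '' (s : Set (Fin n × Fin n)))).IsPrime := by
  classical
  induction s using Finset.induction_on with
  | empty => simpa using Ideal.bot_prime
  | @insert e s he IH =>
    obtain ⟨i, j⟩ := e
    have hij : i < j := hs (i, j) (Finset.mem_insert_self _ _)
    have hs' : ∀ e ∈ s, e.1 < e.2 := fun e h => hs e (Finset.mem_insert_of_mem h)
    have hne : i ≠ j := ne_of_lt hij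
    set Φ := PhiE K i j hne with hΦ
    set J : Ideal (MvPolynomial {w : Fin n × Fin n // w ≠ (i, j) ∧ w ≠ (j, i)} K) :=
      Ideal.span ((fun e : Fin n × Fin n => dmin K i j hne e.1 e.2) '' (s : Set (Fin n × Fin n))) with hJ
    have hptwise : ∀ e ∈ (s : Set (Fin n × Fin n)),
        Φ (diagMinor K n e.1 e.2) = C (dmin K i j hne e.1 e.2) := by
      rintro ⟨a, b⟩ hab
      have hab' : a < b := hs' (a, b) hab
      refine PhiE_minor_other K i j hne a b ?_ ?_ ?_ ?_
      · rintro h; exact he (by simpa [← h] using hab)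
      · rintro h
        rw [Prod.ext_iff] at h
        obtain ⟨rfl, rfl⟩ := h
        exact absurd hij (not_lt.mpr hab'.le)
      · rintro h
        rw [Prod.ext_iff] at h
        obtain ⟨rfl, rfl⟩ := h
        exact absurd hij (not_lt.mpr hab'.le)
      · rintro h
        rw [Prod.ext_iff] at h
        obtain ⟨rfl, rfl⟩ := h
        exact he (by simpa using hab)
    have hmap : Ideal.map Φ.toRingHom
        (Ideal.span ((fun e : Fin n × Fin n => diagMinor K n e.1 e.2) '' (s : Set (Fin n × Fin n))))
          = Ideal.map (C : MvPolynomial {w : Fin n × Fin n // w ≠ (i, j) ∧ w ≠ (j, i)} K →+* MvPolynomial (Fin 2) (MvPolynomial {w : Fin n × Fin n // w ≠ (i, j) ∧ w ≠ (j, i)} K)) J := by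
      rw [Ideal.map_span, hJ, Ideal.map_span, ← Set.image_comp, ← Set.image_comp]
      exact congrArg Ideal.span (Set.image_congr hptwise)
    have hJprime : J.IsPrime := by
      have h2 := map_equiv_isPrime Φ _ (IH hs')
      rw [hmap] at h2
      rw [← comap_C_map_C J]
      haveI := h2
      exact Ideal.IsPrime.comap _
    have hmap2 : Ideal.map Φ.toRingHom (Ideal.span ((fun e : Fin n × Fin n =>
          diagMinor K n e.1 e.2) '' ((insert (i, j) s : Finset (Fin n × Fin n)) :
            Set (Fin n × Fin n))))
        = Ideal.map (C : MvPolynomial {w : Fin n × Fin n // w ≠ (i, j) ∧ w ≠ (j, i)} K →+* MvPolynomial (Fin 2) (MvPolynomial {w : Fin n × Fin n // w ≠ (i, j) ∧ w ≠ (j, i)} K)) J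
            ⊔ Ideal.span {mgen (X (pi0 i j hne (i, i)) * X (pi0 i j hne (j, j)))} := by
      rw [Finset.coe_insert, Set.image_insert_eq, Ideal.span_insert, Ideal.map_sup, hmap,
        Ideal.map_span, Set.image_singleton]
      rw [show Φ.toRingHom (diagMinor K n (i, j).1 (i, j).2)
          = - mgen (X (pi0 i j hne (i, i)) * X (pi0 i j hne (j, j))) from
            PhiE_minor_self K i j hne, Ideal.span_singleton_neg, sup_comm]
    have hfinal : Ideal.span ((fun e : Fin n × Fin n => diagMinor K n e.1 e.2) ''
          ((insert (i, j) s : Finset (Fin n × Fin n)) : Set (Fin n × Fin n)))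
        = Ideal.comap Φ.toRingHom
            (Ideal.map (C : MvPolynomial {w : Fin n × Fin n // w ≠ (i, j) ∧ w ≠ (j, i)} K →+* MvPolynomial (Fin 2) (MvPolynomial {w : Fin n × Fin n // w ≠ (i, j) ∧ w ≠ (j, i)} K)) J
              ⊔ Ideal.span {mgen (X (pi0 i j hne (i, i)) * X (pi0 i j hne (j, j)))}) := by
      rw [← hmap2, Ideal.comap_map_of_bijective Φ.toRingHom Φ.bijective]
    rw [hfinal]
    haveI := lemA2 J hJprime _ (hc_not_mem K i j hne s)
    exact Ideal.IsPrime.comap _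

end Graph

end Stmt9Aux

theorem stmt9 (K : Type*) [Field K] (n : ℕ) (G : SimpleGraph (Fin n)) :
    (diagIdeal K n G).IsPrime := by
  classical
  have hset : {f | ∃ i j : Fin n, G.Adj i j ∧ i < j ∧ f = diagMinor K n i j}
      = (fun e : Fin n × Fin n => diagMinor K n e.1 e.2) ''
        ((Finset.univ.filter (fun e : Fin n × Fin n => G.Adj e.1 e.2 ∧ e.1 < e.2)) :
          Set (Fin n × Fin n)) := by
    ext f
    simp only [Set.mem_setOf_eq, Set.mem_image, Finset.coe_filter, Finset.mem_univ, true_and]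
    constructor
    · rintro ⟨i, j, h1, h2, rfl⟩
      exact ⟨(i, j), ⟨h1, h2⟩, rfl⟩
    · rintro ⟨⟨i, j⟩, ⟨h1, h2⟩, rfl⟩
      exact ⟨i, j, h1, h2, rfl⟩
  rw [diagIdeal, hset]
  exact Stmt9Aux.lemC K _ (fun e he => (Finset.mem_filter.mp he).2.2)
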